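/- Let Q¹, Q² ∈ ℝ^{m×n} be matrices with entries in {0,1}. Then for every u ∈ ℝ^n, componentwise, 1 − min₁(Q¹(1 − u) + Q² u) = ReLU((Q¹ − Q²) u + (1 − Q¹ 𝟙)), where 𝟙 ∈ ℝ^n is the all-ones vector, min₁ is componentwise x ↦ min(x,1), and ReLU is componentwise x ↦ max(x,0). That is, the matricized rule-body evaluation 1 − min₁(Q(1 − u^δ)) equals the output ReLU(W u + b) of a ReLU layer with weight matrix W = Q¹ − Q² and bias b = 1 − Q¹ 𝟙. -/

import Mathlib

open Matrix

/-- for binary matrices `Q¹, Q² ∈ ℝ^{m×n}` and any `u ∈ ℝ^n`, componentwise,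
`1 - min₁(Q¹(1 - u) + Q² u) = ReLU((Q¹ - Q²) u + (1 - Q¹ 𝟙))`, i.e. the matricized
rule-body evaluation equals the output of a ReLU layer with weights `W = Q¹ - Q²` and
bias `b = 1 - Q¹ 𝟙`. -/
theorem stmt14 {m n : ℕ} (Q1 Q2 : Matrix (Fin m) (Fin n) ℝ)
    (hQ1 : ∀ j i, Q1 j i = 0 ∨ Q1 j i = 1) (hQ2 : ∀ j i, Q2 j i = 0 ∨ Q2 j i = 1)
    (u : Fin n → ℝ) (j : Fin m) :
    1 - min (Q1.mulVec (fun i => 1 - u i) j + Q2.mulVec u j) 1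
      = max ((Q1 - Q2).mulVec u j + (1 - Q1.mulVec (fun _ => 1) j)) 0 := by
  have hx : Q1.mulVec (fun i => 1 - u i) j + Q2.mulVec u j
      = Q1.mulVec (fun _ => 1) j - (Q1 - Q2).mulVec u j := by
    simp only [mulVec, dotProduct, Matrix.sub_apply, ← Finset.sum_add_distrib,
      ← Finset.sum_sub_distrib]
    exact Finset.sum_congr rfl fun i _ => by ring
  rw [hx]
  rcases le_total ((Q1 - Q2).mulVec u j + (1 - Q1.mulVec (fun _ => 1) j)) 0 with h | h
  · rw [max_eq_right h, min_eq_right (by linarith)]; ring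
  · rw [max_eq_left h, min_eq_left (by linarith)]; ring
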